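/- In 𝒜q, for every n ∈ ℕ the following recursive relations hold: (i) G_{n+1} = ((q²−q⁻²)/(2(q^{n+1}+q^{−n−1})))·Σ_{k=0}^{n} q^{−n+2k}·(W_{-k}·W_{n+1-k} + W_{k+1}·W_{k-n}) − ((q−q⁻¹)/(2ρ(q^{n+1}+q^{−n−1})))·Σ_{k=0}^{n−1} q^{−n+1+2k}·(G_{k+1}·G̃_{n-k} + G̃_{k+1}·G_{n-k}) + ((q+q⁻¹)/2)·[W_{n+1}, W_0] + Δ_{n+1}/2, where W_{k-n} denotes W_{-(n-k)}; (ii) G̃_{n+1} = G_{n+1} + (q+q⁻¹)·[W_0, W_{n+1}]; (iii) W_{-n-1} = ρ⁻¹·[W_0, G_{n+1}]_q; (iv) W_{n+2} = ρ⁻¹·[G_{n+1}, W_1]_q. -/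

import Mathlib

/- STATEMENT 4: recursive relations for the generators of 𝒜q (Lemma 2.6). -/

noncomputable section

namespace Alt

/-- The base field `F = ℚ(q)`. -/
abbrev F : Type := RatFunc ℚ

/-- The indeterminate `q`. -/
def q : F := RatFunc.X

/-- Commutator `[x,y] = xy - yx`. -/
def br {A : Type*} [Ring A] (x y : A) : A := x * y - y * x

/-- `q`-commutator `[x,y]_q = q·xy - q⁻¹·yx`. -/
def qbr {A : Type*} [Ring A] [Algebra F A] (x y : A) : A :=
  q • (x * y) - q⁻¹ • (y * x)

/-- `q⁻¹`-commutator `[x,y]_{q⁻¹} = q⁻¹·xy - q·yx`. -/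
def qbr' {A : Type*} [Ring A] [Algebra F A] (x y : A) : A :=
  q⁻¹ • (x * y) - q • (y * x)

/-- Generators of the algebra `𝒜q`: `wm k ↦ W_{-k}`, `wp k ↦ W_{k+1}`,
`g k ↦ G_{k+1}`, `gt k ↦ G̃_{k+1}`. -/
inductive Gen : Type
  | wm : ℕ → Gen
  | wp : ℕ → Gen
  | g : ℕ → Gen
  | gt : ℕ → Gen

/-- The free `F`-algebra on the generators. -/
abbrev FA : Type := FreeAlgebra F Gen

/-- `W_{-k}` in the free algebra. -/
def fWm (k : ℕ) : FA := FreeAlgebra.ι F (Gen.wm k)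
/-- `W_{k+1}` in the free algebra. -/
def fWp (k : ℕ) : FA := FreeAlgebra.ι F (Gen.wp k)
/-- `G_{k+1}` in the free algebra. -/
def fG (k : ℕ) : FA := FreeAlgebra.ι F (Gen.g k)
/-- `G̃_{k+1}` in the free algebra. -/
def fGt (k : ℕ) : FA := FreeAlgebra.ι F (Gen.gt k)

/-- The defining relations of `𝒜q` (with parameter `ρ`). -/
inductive rel (ρ : F) : FA → FA → Prop
  | r1a (k : ℕ) : rel ρ (br (fWm 0) (fWp k)) ((q + q⁻¹)⁻¹ • (fGt k - fG k))
  | r1b (k : ℕ) : rel ρ (br (fWm k) (fWp 0)) ((q + q⁻¹)⁻¹ • (fGt k - fG k))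
  | r2a (k : ℕ) : rel ρ (qbr (fWm 0) (fG k)) (ρ • fWm (k + 1))
  | r2b (k : ℕ) : rel ρ (qbr (fGt k) (fWm 0)) (ρ • fWm (k + 1))
  | r3a (k : ℕ) : rel ρ (qbr (fG k) (fWp 0)) (ρ • fWp (k + 1))
  | r3b (k : ℕ) : rel ρ (qbr (fWp 0) (fGt k)) (ρ • fWp (k + 1))
  | r4a (k l : ℕ) : rel ρ (br (fWm k) (fWm l)) 0
  | r4b (k l : ℕ) : rel ρ (br (fWp k) (fWp l)) 0
  | r5 (k l : ℕ) : rel ρ (br (fWm k) (fWp l) + br (fWp k) (fWm l)) 0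
  | r6 (k l : ℕ) : rel ρ (br (fWm k) (fG l) + br (fG k) (fWm l)) 0
  | r7 (k l : ℕ) : rel ρ (br (fWm k) (fGt l) + br (fGt k) (fWm l)) 0
  | r8 (k l : ℕ) : rel ρ (br (fWp k) (fG l) + br (fG k) (fWp l)) 0
  | r9 (k l : ℕ) : rel ρ (br (fWp k) (fGt l) + br (fGt k) (fWp l)) 0
  | r10a (k l : ℕ) : rel ρ (br (fG k) (fG l)) 0
  | r10b (k l : ℕ) : rel ρ (br (fGt k) (fGt l)) 0
  | r11 (k l : ℕ) : rel ρ (br (fGt k) (fG l) + br (fG k) (fGt l)) 0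

/-- The algebra `𝒜q`: the quotient of the free algebra by the two-sided ideal
generated by the defining relations. -/
abbrev Aq (ρ : F) : Type := RingQuot (rel ρ)

/-- The generator `W_{-k}` of `𝒜q`. -/
def Wm (ρ : F) (k : ℕ) : Aq ρ := RingQuot.mkAlgHom F (rel ρ) (fWm k)
/-- The generator `W_{k+1}` of `𝒜q`. -/
def Wp (ρ : F) (k : ℕ) : Aq ρ := RingQuot.mkAlgHom F (rel ρ) (fWp k)
/-- The generator `G_{k+1}` of `𝒜q`. -/
def G (ρ : F) (k : ℕ) : Aq ρ := RingQuot.mkAlgHom F (rel ρ) (fG k)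
/-- The generator `G̃_{k+1}` of `𝒜q`. -/
def Gt (ρ : F) (k : ℕ) : Aq ρ := RingQuot.mkAlgHom F (rel ρ) (fGt k)

/-- The element `Y_{n+1}` of `𝒜q`. -/
def Y (ρ : F) (n : ℕ) : Aq ρ :=
  q ^ (-(n : ℤ) - 1) • G ρ n + q ^ ((n : ℤ) + 1) • Gt ρ n -
    (q ^ (2 : ℤ) - q ^ (-2 : ℤ)) •
      ∑ k ∈ Finset.range (n + 1), q ^ (2 * (k : ℤ) - (n : ℤ)) • (Wm ρ k * Wp ρ (n - k)) +
    ((q - q⁻¹) / ρ) •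
      ∑ k ∈ Finset.range n, q ^ (2 * (k : ℤ) - (n : ℤ) + 1) • (Gt ρ k * G ρ (n - 1 - k))

/-- The central element `Δ_{n+1} = (Y_{n+1} + σ(Y_{n+1}))/(q^{n+1} + q^{-n-1})`,
for a given algebra automorphism `σ` of `𝒜q`. -/
def Δd (ρ : F) (σ : Aq ρ ≃ₐ[F] Aq ρ) (n : ℕ) : Aq ρ :=
  (q ^ ((n : ℤ) + 1) + q ^ (-(n : ℤ) - 1))⁻¹ • (Y ρ n + σ (Y ρ n))

lemma q_ne_zero : (q : F) ≠ 0 := RatFunc.X_ne_zero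

lemma q_pow_add_one_ne (m : ℕ) (hm : 0 < m) : (q : F) ^ m + 1 ≠ 0 := by
  have h : (Polynomial.X ^ m + Polynomial.C (1 : ℚ)) ≠ 0 :=
    Polynomial.X_pow_add_C_ne_zero hm 1
  intro hc
  apply h
  apply RatFunc.algebraMap_injective ℚ
  rw [map_add, map_pow, RatFunc.algebraMap_X, map_zero]
  simpa [q] using hc

lemma q_add_inv_ne : (q : F) + q⁻¹ ≠ 0 := by
  have h2 : (q : F) ^ 2 + 1 ≠ 0 := q_pow_add_one_ne 2 (by norm_num)
  have : (q : F) + q⁻¹ = (q ^ 2 + 1) * q⁻¹ := by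
    field_simp [q_ne_zero]
  rw [this]
  exact mul_ne_zero h2 (inv_ne_zero q_ne_zero)

lemma qD_ne (n : ℕ) : (q : F) ^ ((n : ℤ) + 1) + q ^ (-(n : ℤ) - 1) ≠ 0 := by
  have ha : (q : F) ^ ((n : ℤ) + 1) = q ^ (n + 1) := by
    rw [← zpow_natCast]; push_cast; ring_nf
  have hb : (q : F) ^ (-(n : ℤ) - 1) = (q ^ (n + 1))⁻¹ := by
    rw [← zpow_natCast q (n + 1), ← zpow_neg]
    congr 1; push_cast; ring
  rw [ha, hb]
  have hx : (q : F) ^ (n + 1) ≠ 0 := pow_ne_zero _ q_ne_zero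
  have h2 : ((q : F) ^ (n + 1)) ^ 2 + 1 ≠ 0 := by
    rw [← pow_mul]
    exact q_pow_add_one_ne _ (by positivity)
  have : (q : F) ^ (n + 1) + (q ^ (n + 1))⁻¹ = ((q ^ (n + 1)) ^ 2 + 1) * (q ^ (n + 1))⁻¹ := by
    field_simp
  rw [this]
  exact mul_ne_zero h2 (inv_ne_zero hx)

section Rels

variable (ρ : F)

lemma R1a (k : ℕ) : br (Wm ρ 0) (Wp ρ k) = (q + q⁻¹)⁻¹ • (Gt ρ k - G ρ k) := by
  have h := RingQuot.mkAlgHom_rel F (rel.r1a (ρ := ρ) k)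
  simpa [br, Wm, Wp, G, Gt, map_mul, map_sub, map_smul] using h

lemma R1b (k : ℕ) : br (Wm ρ k) (Wp ρ 0) = (q + q⁻¹)⁻¹ • (Gt ρ k - G ρ k) := by
  have h := RingQuot.mkAlgHom_rel F (rel.r1b (ρ := ρ) k)
  simpa [br, Wm, Wp, G, Gt, map_mul, map_sub, map_smul] using h

lemma R2a (k : ℕ) : qbr (Wm ρ 0) (G ρ k) = ρ • Wm ρ (k + 1) := by
  have h := RingQuot.mkAlgHom_rel F (rel.r2a (ρ := ρ) k)
  simpa [qbr, Wm, G, map_mul, map_sub, map_smul] using h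

lemma R3a (k : ℕ) : qbr (G ρ k) (Wp ρ 0) = ρ • Wp ρ (k + 1) := by
  have h := RingQuot.mkAlgHom_rel F (rel.r3a (ρ := ρ) k)
  simpa [qbr, Wp, G, map_mul, map_sub, map_smul] using h

lemma R5 (k l : ℕ) : br (Wm ρ k) (Wp ρ l) + br (Wp ρ k) (Wm ρ l) = 0 := by
  have h := RingQuot.mkAlgHom_rel F (rel.r5 (ρ := ρ) k l)
  simpa [br, Wm, Wp, map_mul, map_sub, map_add] using h

end Rels

lemma two_ne_zero' : (2 : F) ≠ 0 := by
  intro h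
  have h2 : (algebraMap (Polynomial ℚ) F) 2 = algebraMap (Polynomial ℚ) F 0 := by
    simp only [map_ofNat, map_zero]
    exact h
  have h3 := RatFunc.algebraMap_injective ℚ h2
  have h4 := congrArg (Polynomial.eval (0 : ℚ)) h3
  norm_num at h4

lemma key {M : Type*} [AddCommGroup M] [Module F M]
    (g gt s1 s1' s2 s2' : M) (u v a c e ρ : F)
    (hD : u + v ≠ 0) (he : e ≠ 0) (h2 : (2 : F) ≠ 0) (hρ : ρ ≠ 0) :
    g = (a / (2 * (u + v))) • (s1 + s1') - (c / (2 * ρ * (u + v))) • (s2' + s2)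
      + (e / 2) • (-(e⁻¹ • (gt - g)))
      + (2⁻¹ : F) • ((u + v)⁻¹ •
          ((v • g + u • gt - a • s1 + (c / ρ) • s2)
            + (v • gt + u • g - a • s1' + (c / ρ) • s2'))) := by
  have hE2 : (e / 2) • (-(e⁻¹ • (gt - g))) = (2⁻¹ : F) • (g - gt) := by
    have h0 : -(e⁻¹ • (gt - g)) = e⁻¹ • (g - gt) := by
      rw [← smul_neg, neg_sub]
    have h1 : e / 2 * e⁻¹ = (2⁻¹ : F) := by
      have h3 : e / 2 * e⁻¹ = e * e⁻¹ * 2⁻¹ := by ring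
      rw [h3, mul_inv_cancel₀ he, one_mul]
    rw [h0, smul_smul, h1]
  have hT : (2⁻¹ : F) • ((u + v)⁻¹ •
        ((v • g + u • gt - a • s1 + (c / ρ) • s2)
          + (v • gt + u • g - a • s1' + (c / ρ) • s2')))
      = (2⁻¹ : F) • (g + gt) - (a / (2 * (u + v))) • (s1 + s1')
        + (c / (2 * ρ * (u + v))) • (s2' + s2) := by
    have h1 : (v • g + u • gt - a • s1 + (c / ρ) • s2)
        + (v • gt + u • g - a • s1' + (c / ρ) • s2')
        = (u + v) • (g + gt) - a • (s1 + s1') + (c / ρ) • (s2' + s2) := by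
      simp only [add_smul, smul_add]
      abel
    rw [h1, smul_smul, smul_add, smul_sub, smul_smul, smul_smul, smul_smul]
    rw [show 2⁻¹ * (u + v)⁻¹ * (u + v) = (2⁻¹ : F) by
          rw [mul_assoc, inv_mul_cancel₀ hD, mul_one],
        show 2⁻¹ * (u + v)⁻¹ * a = a / (2 * (u + v)) by
          simp only [div_eq_mul_inv, mul_inv]; ring,
        show 2⁻¹ * (u + v)⁻¹ * (c / ρ) = c / (2 * ρ * (u + v)) by
          simp only [div_eq_mul_inv, mul_inv]; ring]
  rw [hE2, hT]
  have hcomb : ∀ (P Q R S : M), P - Q + R + (S - P + Q) = R + S := by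
    intro P Q R S; abel
  rw [hcomb, ← smul_add]
  have hg : (g - gt) + (g + gt) = (2 : F) • g := by
    rw [two_smul]; abel
  rw [hg, smul_smul, show (2⁻¹ : F) * 2 = 1 from inv_mul_cancel₀ h2, one_smul]

/-- The recursive relations of Lemma 2.6 of the paper, where `σ` is the algebra
automorphism of `𝒜q` determined by `σ(W_{-k}) = W_{k+1}`, `σ(W_{k+1}) = W_{-k}`,
`σ(G_{k+1}) = G̃_{k+1}`, `σ(G̃_{k+1}) = G_{k+1}`. -/
theorem statement4 (ρ : F) (hρ : ρ ≠ 0) (σ : Aq ρ ≃ₐ[F] Aq ρ)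
    (hσ1 : ∀ k : ℕ, σ (Wm ρ k) = Wp ρ k) (hσ2 : ∀ k : ℕ, σ (Wp ρ k) = Wm ρ k)
    (hσ3 : ∀ k : ℕ, σ (G ρ k) = Gt ρ k) (hσ4 : ∀ k : ℕ, σ (Gt ρ k) = G ρ k)
    (n : ℕ) :
    G ρ n =
      ((q ^ (2 : ℤ) - q ^ (-2 : ℤ)) / (2 * (q ^ ((n : ℤ) + 1) + q ^ (-(n : ℤ) - 1)))) •
        ∑ k ∈ Finset.range (n + 1), q ^ (2 * (k : ℤ) - (n : ℤ)) •
          (Wm ρ k * Wp ρ (n - k) + Wp ρ k * Wm ρ (n - k)) -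
      ((q - q⁻¹) / (2 * ρ * (q ^ ((n : ℤ) + 1) + q ^ (-(n : ℤ) - 1)))) •
        ∑ k ∈ Finset.range n, q ^ (2 * (k : ℤ) - (n : ℤ) + 1) •
          (G ρ k * Gt ρ (n - 1 - k) + Gt ρ k * G ρ (n - 1 - k)) +
      ((q + q⁻¹) / 2) • br (Wp ρ n) (Wm ρ 0) + (2⁻¹ : F) • Δd ρ σ n ∧
    Gt ρ n = G ρ n + (q + q⁻¹) • br (Wm ρ 0) (Wp ρ n) ∧
    Wm ρ (n + 1) = ρ⁻¹ • qbr (Wm ρ 0) (G ρ n) ∧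
    Wp ρ (n + 1) = ρ⁻¹ • qbr (G ρ n) (Wp ρ 0) := by
  have he := q_add_inv_ne
  have h2 : (2 : F) ≠ 0 := two_ne_zero'
  have hD := qD_ne n
  refine ⟨?_, ?_, ?_, ?_⟩
  · -- (i)
    have hX : br (Wp ρ n) (Wm ρ 0) = -(((q + q⁻¹)⁻¹ : F) • (Gt ρ n - G ρ n)) := by
      have h5 := R5 ρ n 0
      have h1 := R1b ρ n
      rw [← h1]
      exact eq_neg_of_add_eq_zero_right h5
    have hσY : σ (Y ρ n) =
        q ^ (-(n : ℤ) - 1) • Gt ρ n + q ^ ((n : ℤ) + 1) • G ρ n -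
          (q ^ (2 : ℤ) - q ^ (-2 : ℤ)) •
            ∑ k ∈ Finset.range (n + 1), q ^ (2 * (k : ℤ) - (n : ℤ)) • (Wp ρ k * Wm ρ (n - k)) +
          ((q - q⁻¹) / ρ) •
            ∑ k ∈ Finset.range n, q ^ (2 * (k : ℤ) - (n : ℤ) + 1) • (G ρ k * Gt ρ (n - 1 - k)) := by
      simp [Y, map_add, map_sub, map_smul, map_sum, map_mul, hσ1, hσ2, hσ3, hσ4]
    have hW : ∑ k ∈ Finset.range (n + 1), q ^ (2 * (k : ℤ) - (n : ℤ)) •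
          (Wm ρ k * Wp ρ (n - k) + Wp ρ k * Wm ρ (n - k))
        = (∑ k ∈ Finset.range (n + 1), q ^ (2 * (k : ℤ) - (n : ℤ)) • (Wm ρ k * Wp ρ (n - k)))
          + ∑ k ∈ Finset.range (n + 1), q ^ (2 * (k : ℤ) - (n : ℤ)) • (Wp ρ k * Wm ρ (n - k)) := by
      simp [smul_add, Finset.sum_add_distrib]
    have hG : ∑ k ∈ Finset.range n, q ^ (2 * (k : ℤ) - (n : ℤ) + 1) •
          (G ρ k * Gt ρ (n - 1 - k) + Gt ρ k * G ρ (n - 1 - k))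
        = (∑ k ∈ Finset.range n, q ^ (2 * (k : ℤ) - (n : ℤ) + 1) • (G ρ k * Gt ρ (n - 1 - k)))
          + ∑ k ∈ Finset.range n, q ^ (2 * (k : ℤ) - (n : ℤ) + 1) • (Gt ρ k * G ρ (n - 1 - k)) := by
      simp [smul_add, Finset.sum_add_distrib]
    rw [hW, hG, hX, Δd, hσY, Y]
    exact key (G ρ n) (Gt ρ n) _ _ _ _ _ _ _ _ _ _ hD he h2 hρ
  · -- (ii)
    rw [R1a ρ n, smul_smul, mul_inv_cancel₀ he, one_smul]
    abel
  · -- (iii)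
    rw [R2a ρ n, smul_smul, inv_mul_cancel₀ hρ, one_smul]
  · -- (iv)
    rw [R3a ρ n, smul_smul, inv_mul_cancel₀ hρ, one_smul]

end Alt
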